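/- For every n ≥ 1 there exist real numbers q_1,...,q_n feasible for Wilkinson's linear program with q_1 − q_n = (1/2)·(ln n + ∑_{k=2}^n (ln k)/(k−1)); that is, the bound (1/2)·(ln n + ∑_{k=2}^n (ln k)/(k−1)) is the exact optimal value of Wilkinson's linear program. -/

import Mathlib

open BigOperators

/-- `q 1, ..., q n` is feasible for Wilkinson's linear program:
`∑_{i=1}^k q_i ≤ (k/2) ln k + k q_k` for every `k = 1, ..., n`. -/
def WilkFeasible (n : ℕ) (q : ℕ → ℝ) : Prop :=
  ∀ k : ℕ, 1 ≤ k → k ≤ n →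
    ∑ i ∈ Finset.Icc 1 k, q i ≤ ((k : ℝ) / 2) * Real.log k + (k : ℝ) * q k

noncomputable def wilkT (k : ℕ) : ℝ :=
  -(1/2) * ∑ j ∈ Finset.Icc 2 k, Real.log j / ((j : ℝ) - 1)

noncomputable def wilkS (k : ℕ) : ℝ := (k : ℝ) * wilkT k

noncomputable def wilkq (k : ℕ) : ℝ := wilkS k - wilkS (k - 1)

lemma wilkS_zero : wilkS 0 = 0 := by simp [wilkS]

lemma wilkT_one : wilkT 1 = 0 := by simp [wilkT]

lemma wilkT_succ (m : ℕ) (hm : 1 ≤ m) :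
    wilkT (m + 1) = wilkT m - Real.log (m + 1) / (2 * (m : ℝ)) := by
  unfold wilkT
  rw [Finset.sum_Icc_succ_top (by omega : 2 ≤ m + 1)]
  have hm' : (m : ℝ) ≠ 0 := Nat.cast_ne_zero.mpr (by omega)
  push_cast
  field_simp
  ring_nf
  field_simp

lemma wilk_sum (k : ℕ) : ∑ i ∈ Finset.Icc 1 k, wilkq i = wilkS k := by
  induction k with
  | zero => simp [wilkS_zero]
  | succ k ih =>
    rw [Finset.sum_Icc_succ_top (by omega : 1 ≤ k + 1), ih]
    simp [wilkq]

lemma wilk_key (k : ℕ) (hk : 1 ≤ k) :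
    (k : ℝ) * wilkS (k - 1) = ((k : ℝ) - 1) * wilkS k + ((k : ℝ) / 2) * Real.log k := by
  obtain ⟨m, rfl⟩ := Nat.exists_eq_add_of_le hk
  cases m with
  | zero => simp [wilkS, wilkT_one]
  | succ m =>
    have hT := wilkT_succ (m + 1) (by omega)
    have hm' : ((m : ℝ) + 1) ≠ 0 := by positivity
    have h1 : (1 + (m + 1)) - 1 = m + 1 := by omega
    rw [h1]
    simp only [wilkS]
    have h2 : ((1 + (m + 1) : ℕ) : ℝ) = (m : ℝ) + 1 + 1 := by push_cast; ring
    have h3 : (1 + (m + 1) : ℕ) = (m + 1) + 1 := by omega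
    rw [h2, h3, hT]
    push_cast
    field_simp
    ring

theorem wilk_lp_bound_tight (n : ℕ) (hn : 1 ≤ n) :
    ∃ q : ℕ → ℝ, WilkFeasible n q ∧
      q 1 - q n =
        (1 / 2) * (Real.log n + ∑ k ∈ Finset.Icc 2 n, Real.log k / ((k : ℝ) - 1)) := by
  refine ⟨wilkq, ?_, ?_⟩
  · intro k hk _
    rw [wilk_sum]
    have := wilk_key k hk
    have h : wilkq k = wilkS k - wilkS (k - 1) := rfl
    rw [h]
    nlinarith [this]
  · have hsum : ∑ k ∈ Finset.Icc 2 n, Real.log k / ((k : ℝ) - 1) = -2 * wilkT n := by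
      simp only [wilkT]; ring
    rw [hsum]
    have hq1 : wilkq 1 = 0 := by simp [wilkq, wilkS, wilkT_one, wilkS_zero]
    obtain ⟨m, rfl⟩ := Nat.exists_eq_add_of_le hn
    cases m with
    | zero => simp [hq1, wilkT_one]
    | succ m =>
      have hT := wilkT_succ (m + 1) (by omega)
      have hm' : ((m : ℝ) + 1) ≠ 0 := by positivity
      have h1 : (1 + (m + 1)) - 1 = m + 1 := by omega
      have h3 : (1 + (m + 1) : ℕ) = (m + 1) + 1 := by omega
      rw [hq1, h3]
      simp only [wilkq, wilkS, Nat.add_sub_cancel, hT]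
      push_cast
      field_simp
      ring
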